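/- Let m ∈ ℕ, λ ∈ ℝ, let F : [0,∞) → (m × m real matrices) and g : [0,∞) → ℝ^m (row vectors) be continuous, let A : [0,∞) → (m × m real matrices) be differentiable with A'(t) = F(t)·A(t) and A(0) = 1, and let ψ : [0,∞) → ℝ^m be differentiable with ψ'(t) = −ψ(t)·F(t) − λ·g(t) for all t ≥ 0. Suppose there is an unbounded increasing sequence (τ_n) in [0,∞) and a vector I_* ∈ ℝ^m such that ∫_0^{τ_n} g(t)·A(t) dt → I_* and ‖ψ(τ_n)·A(τ_n)‖ → 0 as n → ∞. Then ψ(0) = λ·I_*, and for every T ≥ 0: ψ(T)·A(T) = λ·(I_* − ∫_0^T g(t)·A(t) dt). -/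

import Mathlib

open Filter Topology

/-- Core computation of Proposition 6 ('aff') of the paper: if along an unbounded
increasing sequence of times `τ_n` one has `∫_0^{τ_n} g·A → I_*` and
`‖ψ(τ_n)·A(τ_n)‖ → 0`, then the adjoint variable satisfies the
Aseev–Kryazhimskii Cauchy-type formula: `ψ(0) = λ·I_*` and
`ψ(T)·A(T) = λ·(I_* − ∫_0^T g·A)` for every `T ≥ 0`. -/
theorem stmt_9 (m : ℕ) (lam : ℝ)
    (F : ℝ → Matrix (Fin m) (Fin m) ℝ) (g : ℝ → Fin m → ℝ)
    (hFc : ∀ i j, ContinuousOn (fun t => F t i j) (Set.Ici 0))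
    (hgc : ∀ i, ContinuousOn (fun t => g t i) (Set.Ici 0))
    (A : ℝ → Matrix (Fin m) (Fin m) ℝ)
    (hA : ∀ t ≥ (0:ℝ), ∀ i j,
      HasDerivWithinAt (fun s => A s i j) ((F t * A t) i j) (Set.Ici 0) t)
    (hA0 : A 0 = 1)
    (ψ : ℝ → Fin m → ℝ)
    (hψ : ∀ t ≥ (0:ℝ),
      HasDerivWithinAt ψ (-(Matrix.vecMul (ψ t) (F t)) - lam • g t) (Set.Ici 0) t)
    (τ : ℕ → ℝ) (hτ0 : ∀ n, 0 ≤ τ n) (hτmono : StrictMono τ)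
    (hτTop : Tendsto τ atTop atTop)
    (Istar : Fin m → ℝ)
    (hI : Tendsto (fun n => ∫ t in (0:ℝ)..τ n, Matrix.vecMul (g t) (A t))
      atTop (𝓝 Istar))
    (hψA : Tendsto (fun n => ‖Matrix.vecMul (ψ (τ n)) (A (τ n))‖) atTop (𝓝 0)) :
    ψ 0 = lam • Istar ∧
    ∀ T ≥ (0:ℝ),
      Matrix.vecMul (ψ T) (A T)
        = lam • (Istar - ∫ t in (0:ℝ)..T, Matrix.vecMul (g t) (A t)) := by
  -- Continuity of A on Ici 0
  have hAc : ∀ i j, ContinuousOn (fun t => A t i j) (Set.Ici 0) :=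
    fun i j t ht => (hA t ht i j).continuousWithinAt
  -- continuous extension of g·A to all of ℝ
  set σ : ℝ → ℝ := fun t => max t 0 with hσ
  have hσc : Continuous σ := continuous_id.max continuous_const
  have hσmem : ∀ t, σ t ∈ Set.Ici (0:ℝ) := fun t => Set.mem_Ici.2 (le_max_right _ _)
  have hσeq : ∀ t ∈ Set.Ici (0:ℝ), σ t = t := fun t ht => max_eq_left ht
  set G : ℝ → Fin m → ℝ := fun t => Matrix.vecMul (g (σ t)) (A (σ t)) with hG
  have hGc : Continuous G := by
    refine continuous_pi fun j => ?_
    have : (fun t => G t j) = fun t => ∑ i, g (σ t) i * A (σ t) i j := by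
      funext t; simp [hG, Matrix.vecMul, dotProduct]
    rw [this]
    exact continuous_finset_sum _ fun i _ =>
      (((hgc i).comp_continuous hσc hσmem).mul ((hAc i j).comp_continuous hσc hσmem))
  -- equality of integrals
  have hInt : ∀ T, 0 ≤ T → (∫ t in (0:ℝ)..T, Matrix.vecMul (g t) (A t))
      = ∫ t in (0:ℝ)..T, G t := by
    intro T hT
    refine intervalIntegral.integral_congr fun t ht => ?_
    rw [Set.uIcc_of_le hT] at ht
    simp [hG, hσeq t ht.1]
  set J : ℝ → Fin m → ℝ := fun T => ∫ t in (0:ℝ)..T, G t with hJ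
  have hJderiv : ∀ t : ℝ, HasDerivAt J (G t) t := fun t =>
    (hGc.integral_hasStrictDerivAt 0 t).hasDerivAt
  -- the conserved quantity
  set h : ℝ → Fin m → ℝ := fun t => Matrix.vecMul (ψ t) (A t) + lam • J t with hh
  have hhderiv : ∀ t ≥ (0:ℝ), HasDerivWithinAt h 0 (Set.Ici 0) t := by
    intro t ht
    have hψA' : HasDerivWithinAt (fun s => Matrix.vecMul (ψ s) (A s))
        (-(lam • Matrix.vecMul (g t) (A t))) (Set.Ici 0) t := by
      rw [hasDerivWithinAt_pi]
      intro j
      have heval : (fun s => Matrix.vecMul (ψ s) (A s) j)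
          = fun s => ∑ i, ψ s i * A s i j := by
        funext s; simp [Matrix.vecMul, dotProduct]
      have hsum : HasDerivWithinAt (fun s => ∑ i, ψ s i * A s i j)
          (∑ i, ((-(Matrix.vecMul (ψ t) (F t)) - lam • g t) i * A t i j
            + ψ t i * (F t * A t) i j)) (Set.Ici 0) t := by
        refine HasDerivWithinAt.fun_sum fun i _ => ?_
        have hψi : HasDerivWithinAt (fun s => ψ s i)
            ((-(Matrix.vecMul (ψ t) (F t)) - lam • g t) i) (Set.Ici 0) t :=
          (hasDerivWithinAt_pi.1 (hψ t ht)) i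
        exact hψi.mul (hA t ht i j)
      have hkey : (∑ i, ((-(Matrix.vecMul (ψ t) (F t)) - lam • g t) i * A t i j
            + ψ t i * (F t * A t) i j))
          = -(lam • Matrix.vecMul (g t) (A t)) j := by
        have e1 : ∀ i, (-(Matrix.vecMul (ψ t) (F t)) - lam • g t) i * A t i j
              + ψ t i * (F t * A t) i j
            = ψ t i * (F t * A t) i j - (∑ k, ψ t k * F t k i) * A t i j
              - lam * (g t i * A t i j) := by
          intro i
          simp only [Pi.sub_apply, Pi.neg_apply, Pi.smul_apply, smul_eq_mul,
            Matrix.vecMul, dotProduct]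
          ring
        rw [Finset.sum_congr rfl fun i _ => e1 i, Finset.sum_sub_distrib,
          Finset.sum_sub_distrib]
        have e2 : ∑ i, ψ t i * (F t * A t) i j
            = ∑ i, (∑ k, ψ t k * F t k i) * A t i j := by
          simp_rw [Matrix.mul_apply, Finset.mul_sum, Finset.sum_mul]
          rw [Finset.sum_comm]
          ring_nf
        rw [e2, sub_self, zero_sub, ← Finset.mul_sum]
        simp [Matrix.vecMul, dotProduct, Finset.mul_sum]
      have e3 : (-(lam • Matrix.vecMul (g t) (A t))) j
          = ∑ i, ((-(Matrix.vecMul (ψ t) (F t)) - lam • g t) i * A t i j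
            + ψ t i * (F t * A t) i j) := by
        rw [hkey]; simp
      rw [heval, e3]
      exact hsum
    have hJd : HasDerivWithinAt (fun s => lam • J s)
        (lam • Matrix.vecMul (g t) (A t)) (Set.Ici 0) t := by
      have h1 := ((hJderiv t).hasDerivWithinAt (s := Set.Ici 0)).const_smul lam
      have hGt : G t = Matrix.vecMul (g t) (A t) := by
        simp only [hG]; rw [hσeq t ht]
      rwa [hGt] at h1
    have h2 := hψA'.fun_add hJd
    simpa using h2
  -- h is constant on Ici 0
  have hconst : ∀ t, 0 ≤ t → h t = h 0 := by
    intro t ht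
    have := constant_of_has_deriv_right_zero (f := h) (a := 0) (b := t)
      (fun s hs => ((hhderiv s hs.1).continuousWithinAt).mono Set.Icc_subset_Ici_self)
      (fun s hs => (hhderiv s hs.1).mono (Set.Ici_subset_Ici.2 hs.1))
    exact this t (Set.mem_Icc.2 ⟨ht, le_refl t⟩)
  have hh0 : h 0 = ψ 0 := by
    simp [hh, hJ, hA0, Matrix.vecMul_one, intervalIntegral.integral_same]
  -- limit along τ
  have hlim : Tendsto (fun n => h (τ n)) atTop (𝓝 (lam • Istar)) := by
    have h1 : Tendsto (fun n => Matrix.vecMul (ψ (τ n)) (A (τ n))) atTop (𝓝 0) :=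
      tendsto_zero_iff_norm_tendsto_zero.2 hψA
    have h2 : Tendsto (fun n => lam • J (τ n)) atTop (𝓝 (lam • Istar)) := by
      have e : (fun n => lam • J (τ n))
          = fun n => lam • (∫ t in (0:ℝ)..τ n, Matrix.vecMul (g t) (A t)) := by
        funext n; simp only [hJ]; rw [← hInt (τ n) (hτ0 n)]
      rw [e]
      exact hI.const_smul lam
    have := h1.add h2
    simpa [hh] using this
  have hconstlim : Tendsto (fun n => h (τ n)) atTop (𝓝 (h 0)) := by
    have : (fun n => h (τ n)) = fun _ => h 0 := funext fun n => hconst (τ n) (hτ0 n)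
    rw [this]; exact tendsto_const_nhds
  have hmain : h 0 = lam • Istar := tendsto_nhds_unique hconstlim hlim
  constructor
  · rw [← hh0]; exact hmain
  · intro T hT
    have hT' : h T = h 0 := hconst T hT
    have : Matrix.vecMul (ψ T) (A T) = h T - lam • J T := by
      simp [hh]
    have hJT : J T = ∫ t in (0:ℝ)..T, Matrix.vecMul (g t) (A t) := by
      simp only [hJ]; rw [← hInt T hT]
    rw [this, hT', hmain, hJT, smul_sub]
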